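/- The characteristic-polynomial coefficients of M and Ω satisfy: tr M = -R/2 = -½ tr Ω; σ²_Ω = 4σ²_M where 4σ²_M = R₄R₅ + R₅R₃ + R₃R₄ + w₃² + w₄² + w₅²; and -8 det M = R₃R₄R₅ + R₃w₃² + R₄w₄² + R₅w₅². -/

import Mathlib

open Matrix Polynomial

set_option maxHeartbeats 1000000 in
/-- Characteristic-polynomial coefficients of `M` and `Ω`:
`tr M = -R/2 = -½ tr Ω`, `σ²_Ω = 4σ²_M` with
`4σ²_M = R₄R₅ + R₅R₃ + R₃R₄ + w₃² + w₄² + w₅²`, and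
`-8 det M = R₃R₄R₅ + R₃w₃² + R₄w₄² + R₅w₅²`. -/
theorem stmt12 (R3 R4 R5 w3 w4 w5 R : ℝ) (hR : R = R3 + R4 + R5)
    (M : Matrix (Fin 3) (Fin 3) ℝ)
    (hM : M = !![-R3/2, -w5/2, w4/2;
                 w5/2, -R4/2, -w3/2;
                 -w4/2, w3/2, -R5/2])
    (Om : Matrix (Fin 4) (Fin 4) ℝ)
    (hOm : Om = !![R/2, -w3, -w4, -w5;
                   w3, R/2 - R3, 0, 0;
                   w4, 0, R/2 - R4, 0;
                   w5, 0, 0, R/2 - R5]) :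
    M.trace = -R/2 ∧
    Om.trace = R ∧
    4 * M.charpoly.coeff 1 = R4*R5 + R5*R3 + R3*R4 + w3^2 + w4^2 + w5^2 ∧
    Om.charpoly.coeff 2 = 4 * M.charpoly.coeff 1 ∧
    -8 * M.det = R3*R4*R5 + R3*w3^2 + R4*w4^2 + R5*w5^2 := by
  subst hR
  have hMc : M.charpoly = X^3 + C ((R3+R4+R5)/2) * X^2
      + C ((R4*R5 + R5*R3 + R3*R4 + w3^2 + w4^2 + w5^2)/4) * X
      + C ((R3*R4*R5 + R3*w3^2 + R4*w4^2 + R5*w5^2)/8) := by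
    subst hM
    rw [Matrix.charpoly, Matrix.det_fin_three]
    apply Polynomial.funext
    intro x
    simp [charmatrix_apply, Matrix.one_apply]
    ring
  have hOc : Om.charpoly = X^4 + C (-(R3+R4+R5)) * X^3
      + C (R4*R5 + R5*R3 + R3*R4 + w3^2 + w4^2 + w5^2) * X^2
      + C (-((R3+R4+R5)*(R3*R4+R3*R5+R4*R5) - (R3+R4+R5)^3/4 - R3*R4*R5)
            - (w3^2*R3 + w4^2*R4 + w5^2*R5)) * X
      + C (-((R3+R4+R5)^4/16) + ((R3+R4+R5)^2/4)*(R3*R4+R3*R5+R4*R5)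
            - ((R3+R4+R5)/2)*(R3*R4*R5)
            + w3^2*(-((R3+R4+R5)^2/4) + ((R3+R4+R5)/2)*R3 + R4*R5)
            + w4^2*(-((R3+R4+R5)^2/4) + ((R3+R4+R5)/2)*R4 + R3*R5)
            + w5^2*(-((R3+R4+R5)^2/4) + ((R3+R4+R5)/2)*R5 + R3*R4)) := by
    subst hOm
    rw [Matrix.charpoly]
    apply Polynomial.funext
    intro x
    rw [show (Polynomial.eval x : ℝ[X] → ℝ) = ⇑(Polynomial.evalRingHom x) from rfl,
      RingHom.map_det, RingHom.mapMatrix_apply]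
    have hmap : ∀ (A : Matrix (Fin 4) (Fin 4) ℝ),
        (charmatrix A).map (Polynomial.evalRingHom x)
          = Matrix.of (fun i j => (if i = j then x else 0) - A i j) := by
      intro A; ext i j
      by_cases h : i = j <;> simp [charmatrix_apply, Matrix.diagonal_apply, h]
    rw [hmap]
    rw [Matrix.det_succ_row_zero]
    simp [Fin.sum_univ_succ, Matrix.det_fin_three, Fin.succ_ne_zero, Matrix.submatrix_apply,
      Fin.succAbove, Matrix.cons_val_zero,
      Matrix.cons_val_one, Matrix.head_cons, Matrix.cons_val_fin_one, Fin.val_succ]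
    ring
  have hc1 : M.charpoly.coeff 1
      = (R4*R5 + R5*R3 + R3*R4 + w3^2 + w4^2 + w5^2)/4 := by
    rw [hMc]; simp
  refine ⟨?_, ?_, ?_, ?_, ?_⟩
  · subst hM
    rw [Matrix.trace_fin_three]
    simp; ring
  · subst hOm
    simp [Matrix.trace, Matrix.diag, Fin.sum_univ_succ]
    ring
  · rw [hc1]; ring
  · rw [hOc, hc1]
    simp only [coeff_add, coeff_C_mul, coeff_X_pow, coeff_X, coeff_C]
    norm_num
    ring
  · subst hM
    rw [Matrix.det_fin_three]
    simp
    ring
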